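/- Let a, b ∈ ℂ with a ≠ 0 and b ≠ 0, and let t ∈ ℂ with t ≠ 0. The restriction of L(z,w) = az + bw to the fiber G⁻¹(t) of G(z,w) = z + z²w is a proper map to ℂ: if a sequence of points in G⁻¹(t) tends to infinity, then L of the sequence tends to infinity. -/
import Mathlib

/-- For a, b ≠ 0 and t ≠ 0, the restriction of L(z,w) = az + bw to the fiber
G⁻¹(t) of G(z,w) = z + z²w is a proper map to ℂ. -/
theorem stmt_6 (a b t : ℂ) (ha : a ≠ 0) (hb : b ≠ 0) (ht : t ≠ 0) :
    IsProperMap (fun p : {p : ℂ × ℂ // p.1 + p.1 ^ 2 * p.2 = t} =>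
      a * p.1.1 + b * p.1.2) := by
  rw [isProperMap_iff_isCompact_preimage]
  constructor
  · exact (continuous_const.mul (continuous_fst.comp continuous_subtype_val)).add
      (continuous_const.mul (continuous_snd.comp continuous_subtype_val))
  · intro K hK
    rw [Subtype.isCompact_iff, Metric.isCompact_iff_isClosed_bounded]
    constructor
    · have himg : (Subtype.val '' ((fun p : {p : ℂ × ℂ // p.1 + p.1 ^ 2 * p.2 = t} =>
          a * p.1.1 + b * p.1.2) ⁻¹' K))
          = {p : ℂ × ℂ | p.1 + p.1 ^ 2 * p.2 = t}
            ∩ ((fun p : ℂ × ℂ => a * p.1 + b * p.2) ⁻¹' K) := by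
        ext p
        constructor
        · rintro ⟨⟨q, hq⟩, hqK, rfl⟩
          exact ⟨hq, hqK⟩
        · rintro ⟨hp, hpK⟩
          exact ⟨⟨p, hp⟩, hpK, rfl⟩
      rw [himg]
      exact (isClosed_eq (by fun_prop) continuous_const).inter
        (hK.isClosed.preimage (by fun_prop))
    · obtain ⟨M₀, hM₀⟩ := hK.isBounded.exists_norm_le
      set M : ℝ := max M₀ 0 with hMdef
      have hM : ∀ x ∈ K, ‖x‖ ≤ M := fun x hx => (hM₀ x hx).trans (le_max_left _ _)
      have hM0 : 0 ≤ M := le_max_right _ _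
      have ha' : 0 < ‖a‖ := norm_pos_iff.mpr ha
      have hb' : 0 < ‖b‖ := norm_pos_iff.mpr hb
      set R : ℝ := max 1 ((M + ‖b‖ * (‖t‖ + 1)) / ‖a‖) with hRdef
      set R2 : ℝ := (M + ‖a‖ * R) / ‖b‖ with hR2def
      rw [isBounded_iff_forall_norm_le]
      refine ⟨max R R2, ?_⟩
      rintro p ⟨⟨⟨z, w⟩, hzw⟩, hLK, rfl⟩
      simp only at hzw hLK
      have hL : ‖a * z + b * w‖ ≤ M := hM _ hLK
      -- bound on z
      have hzR : ‖z‖ ≤ R := by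
        by_cases h1 : ‖z‖ ≤ 1
        · exact h1.trans (le_max_left _ _)
        · push_neg at h1
          -- w = (t - z)/z², estimate ‖w‖ ≤ ‖t‖ + 1
          have hzw' : z ^ 2 * w = t - z := by linear_combination hzw
          have hw1 : ‖z‖ ^ 2 * ‖w‖ ≤ ‖t‖ + ‖z‖ := by
            calc ‖z‖ ^ 2 * ‖w‖ = ‖z ^ 2 * w‖ := by rw [norm_mul, norm_pow]
              _ = ‖t - z‖ := by rw [hzw']
              _ ≤ ‖t‖ + ‖z‖ := norm_sub_le _ _
          have hw2 : ‖w‖ ≤ ‖t‖ + 1 := by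
            by_contra hcon
            push_neg at hcon
            have h2 : (‖t‖ + 1) * ‖z‖ ^ 2 ≤ ‖z‖ ^ 2 * ‖w‖ := by nlinarith [sq_nonneg ‖z‖]
            have hz2 : (1:ℝ) ≤ ‖z‖ ^ 2 := by nlinarith
            have h3 : ‖t‖ * 1 ≤ ‖t‖ * ‖z‖ ^ 2 :=
              mul_le_mul_of_nonneg_left hz2 (norm_nonneg t)
            rw [mul_one] at h3
            have h4 : ‖z‖ < ‖z‖ ^ 2 := by nlinarith
            nlinarith
          have haz : ‖a‖ * ‖z‖ ≤ M + ‖b‖ * (‖t‖ + 1) := by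
            have : ‖a * z‖ ≤ ‖a * z + b * w‖ + ‖b * w‖ := by
              calc ‖a * z‖ = ‖(a * z + b * w) - b * w‖ := by ring_nf
                _ ≤ ‖a * z + b * w‖ + ‖b * w‖ := norm_sub_le _ _
            rw [norm_mul] at this
            have hbw : ‖b * w‖ ≤ ‖b‖ * (‖t‖ + 1) := by
              rw [norm_mul]
              exact mul_le_mul_of_nonneg_left hw2 hb'.le
            linarith
          refine le_trans ?_ (le_max_right 1 _)
          rw [le_div_iff₀ ha']
          linarith [haz]
      -- bound on w
      have hwR : ‖w‖ ≤ R2 := by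
        have hbw : ‖b‖ * ‖w‖ ≤ M + ‖a‖ * R := by
          have : ‖b * w‖ ≤ ‖a * z + b * w‖ + ‖a * z‖ := by
            calc ‖b * w‖ = ‖(a * z + b * w) - a * z‖ := by ring_nf
              _ ≤ ‖a * z + b * w‖ + ‖a * z‖ := norm_sub_le _ _
          rw [norm_mul] at this
          have : ‖b‖ * ‖w‖ ≤ M + ‖a‖ * ‖z‖ := by
            rw [norm_mul] at this; linarith
          have : ‖a‖ * ‖z‖ ≤ ‖a‖ * R := mul_le_mul_of_nonneg_left hzR ha'.le
          linarith
        rw [hR2def, le_div_iff₀ hb']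
        linarith
      rw [Prod.norm_def]
      exact max_le (hzR.trans (le_max_left _ _)) (hwR.trans (le_max_right _ _))
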